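/- Let D be a distribution on X × {0,1} with p = Pr_{(x,y)∼D}[y = 1], let f : X → {0,1}, and let k ≥ 1. For a bag of k i.i.d. draws (x_1,y_1),…,(x_k,y_k) from D with α = (1/k)·Σ_{j=1}^k y_j, define the EasyLLP 0-1 loss estimate ℓ_EZ(f,(B,α)) = (k(α − p) + p)·(1 − (1/k)·Σ_{j=1}^k f(x_j)) + (k(p − α) + (1 − p))·((1/k)·Σ_{j=1}^k f(x_j)). Then E[ℓ_EZ(f,(B,α))] = L(f) = Pr_{(x,y)∼D}[f(x) ≠ y], i.e., ℓ_EZ is an unbiased estimate of the instance-level classification loss. -/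

import Mathlib

open MeasureTheory Finset
open scoped ENNReal NNReal

noncomputable section

namespace LLP

/-- Real value of a Boolean label/prediction (`0` or `1`). -/
def bval (b : Bool) : ℝ := if b then 1 else 0

/-- Label proportion `α` of a bag of `k` labeled examples. -/
def labelProp {X : Type*} {k : ℕ} (bag : Fin k → X × Bool) : ℝ :=
  (∑ j, bval (bag j).2) / (k : ℝ)

/-- Average prediction `(1/k)·Σ_j f(x_j)` of `f` on a bag. -/
def predProp {X : Type*} {k : ℕ} (f : X → Bool) (bag : Fin k → X × Bool) : ℝ :=
  (∑ j, bval (f (bag j).1)) / (k : ℝ)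

/-- Instance-level classification loss `L(f) = Pr_{(x,y)∼D}[f(x) ≠ y]`. -/
def err {X : Type*} [MeasurableSpace X] (D : Measure (X × Bool)) (f : X → Bool) : ℝ :=
  (D {p | f p.1 ≠ p.2}).toReal

/-- `S` is shattered by the Boolean-valued class `F`. -/
def Shatters {Z : Type*} (F : Set (Z → Bool)) (S : Finset Z) : Prop :=
  ∀ T ⊆ S, ∃ f ∈ F, ∀ z ∈ S, (f z = true ↔ z ∈ T)

/-- The VC dimension of `F` is at most `d`. -/
def VCDimLE {Z : Type*} (F : Set (Z → Bool)) (d : ℕ) : Prop :=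
  ∀ S : Finset Z, Shatters F S → S.card ≤ d

/-- Joint distribution of `n` i.i.d. bags, each consisting of `k` i.i.d. draws from `D`. -/
def bagMeasure {X : Type*} [MeasurableSpace X] (D : Measure (X × Bool)) (n k : ℕ) :
    Measure (Fin n → Fin k → X × Bool) :=
  Measure.pi fun _ => Measure.pi fun _ => D

/-- Empirical proportional (0-1) risk: fraction of bags whose predicted proportion
mismatches the observed label proportion. -/
def empPM {X : Type*} {n k : ℕ} (f : X → Bool) (ω : Fin n → Fin k → X × Bool) : ℝ :=
  (∑ i, if predProp f (ω i) = labelProp (ω i) then (0 : ℝ) else 1) / (n : ℝ)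

/-- Empirical proportional square loss. -/
def empSQ {X : Type*} {n k : ℕ} (f : X → Bool) (ω : Fin n → Fin k → X × Bool) : ℝ :=
  (∑ i, (predProp f (ω i) - labelProp (ω i)) ^ 2) / (n : ℝ)

/-- The EasyLLP estimate of the 0-1 loss on a single bag, using marginal label
proportion `p`. -/
def ellEZ {X : Type*} {k : ℕ} (p : ℝ) (f : X → Bool) (bag : Fin k → X × Bool) : ℝ :=
  ((k : ℝ) * (labelProp bag - p) + p) * (1 - predProp f bag)
    + ((k : ℝ) * (p - labelProp bag) + (1 - p)) * predProp f bag

/-- Marginal label proportion `p = Pr[y = 1]`. -/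
def labelP {X : Type*} [MeasurableSpace X] (D : Measure (X × Bool)) : ℝ :=
  (D {q | q.2 = true}).toReal

end LLP

namespace LLP

section Aux

variable {Z : Type*} [MeasurableSpace Z] (μ : Measure Z) [IsProbabilityMeasure μ]

lemma integrable_of_bounded {F : Z → ℝ} (hF : Measurable F) (C : ℝ)
    (h : ∀ a, |F a| ≤ C) : Integrable F μ :=
  (integrable_const C).mono' hF.aestronglyMeasurable (Filter.Eventually.of_forall h)

lemma pi_integral_single {k : ℕ} (j : Fin k) (g : Z → ℝ) (hg : Integrable g μ) :
    ∫ ω, g (ω j) ∂(Measure.pi fun _ : Fin k => μ) = ∫ z, g z ∂μ := by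
  classical
  letI : MeasureSpace Z := ⟨μ⟩
  have h := MeasureTheory.integral_fintype_prod_eq_prod (𝕜 := ℝ) (ι := Fin k)
    (fun i => if i = j then g else fun _ => (1 : ℝ)) (μ := fun _ => μ)
  have h1 : ∀ x : Fin k → Z,
      (∏ i, (if i = j then g else fun _ => (1 : ℝ)) (x i)) = g (x j) := by
    intro x
    rw [Finset.prod_eq_single j]
    · simp
    · intro i _ hij; simp [hij]
    · simp
  have h2 : (∏ i : Fin k, ∫ z, (if i = j then g else fun _ => (1 : ℝ)) z ∂μ)
      = ∫ z, g z ∂μ := by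
    rw [Finset.prod_eq_single j]
    · simp
    · intro i _ hij; simp [hij]
    · simp
  simp only [h1] at h
  rw [← h2]
  exact h

lemma pi_integral_pair {k : ℕ} {i j : Fin k} (hij : i ≠ j) (g h : Z → ℝ)
    (hg : Integrable g μ) (hh : Integrable h μ) :
    ∫ ω, g (ω i) * h (ω j) ∂(Measure.pi fun _ : Fin k => μ)
      = (∫ z, g z ∂μ) * ∫ z, h z ∂μ := by
  classical
  letI : MeasureSpace Z := ⟨μ⟩
  set F : Fin k → Z → ℝ := fun l => if l = i then g else if l = j then h else fun _ => 1
    with hF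
  have hmain := MeasureTheory.integral_fintype_prod_eq_prod (𝕜 := ℝ) (ι := Fin k) F (μ := fun _ => μ)
  have h1 : ∀ x : Fin k → Z, (∏ l, F l (x l)) = g (x i) * h (x j) := by
    intro x
    rw [← Finset.prod_subset (Finset.subset_univ ({i, j} : Finset (Fin k)))
      (by intro l _ hl
          simp only [Finset.mem_insert, Finset.mem_singleton, not_or] at hl
          simp [hF, hl.1, hl.2])]
    rw [Finset.prod_pair hij]
    simp [hF, hij, Ne.symm hij]
  have h2 : (∏ l : Fin k, ∫ z, F l z ∂μ) = (∫ z, g z ∂μ) * ∫ z, h z ∂μ := by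
    rw [← Finset.prod_subset (Finset.subset_univ ({i, j} : Finset (Fin k)))
      (by intro l _ hl
          simp only [Finset.mem_insert, Finset.mem_singleton, not_or] at hl
          simp [hF, hl.1, hl.2])]
    rw [Finset.prod_pair hij]
    simp [hF, hij, Ne.symm hij]
  simp only [h1] at hmain
  rw [← h2]
  exact hmain

end Aux

/-- Proposition 4.2 of Busa-Fekete et al., unbiasedness of the
EasyLLP 0-1 loss estimate. For a bag of `k ≥ 1` i.i.d. draws from `D`, with
`p = Pr[y = 1]`, `E[ℓ_EZ(f,(B,α))] = L(f)`. -/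
theorem easyllp_unbiased
    (X : Type*) [MeasurableSpace X] (D : Measure (X × Bool)) [IsProbabilityMeasure D]
    (f : X → Bool) (hf : Measurable f) (k : ℕ) (hk : 1 ≤ k) :
    ∫ bag, ellEZ (labelP D) f bag ∂(Measure.pi fun _ : Fin k => D) = err D f := by
  classical
  have hk0 : (k : ℝ) ≠ 0 := Nat.cast_ne_zero.mpr (by omega)
  set gy : X × Bool → ℝ := fun z => bval z.2 with hgy
  set gf : X × Bool → ℝ := fun z => bval (f z.1) with hgf
  set gyf : X × Bool → ℝ := fun z => bval z.2 * bval (f z.1) with hgyf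
  have hbval : ∀ b : Bool, |bval b| ≤ 1 := by intro b; cases b <;> simp [bval]
  have hmy : Measurable gy := (Measurable.of_discrete (f := bval)).comp measurable_snd
  have hmf : Measurable gf := (Measurable.of_discrete (f := bval)).comp (hf.comp measurable_fst)
  have hmyf : Measurable gyf := hmy.mul hmf
  have hiy : Integrable gy D := integrable_of_bounded D hmy 1 fun a => hbval _
  have hif : Integrable gf D := integrable_of_bounded D hmf 1 fun a => hbval _
  have habs : ∀ a b : Bool, |bval a * bval b| ≤ 1 := by
    intro a b
    rw [abs_mul]
    calc |bval a| * |bval b| ≤ 1 * 1 :=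
          mul_le_mul (hbval _) (hbval _) (abs_nonneg _) zero_le_one
      _ = 1 := one_mul 1
  have hiyf : Integrable gyf D := integrable_of_bounded D hmyf 1 fun a => habs _ _
  set I1 : ℝ := ∫ z, gy z ∂D with hI1
  set I2 : ℝ := ∫ z, gf z ∂D with hI2
  set I3 : ℝ := ∫ z, gyf z ∂D with hI3
  -- the marginal label proportion is `I1`
  have hp : labelP D = I1 := by
    have hs : MeasurableSet {q : X × Bool | q.2 = true} :=
      measurable_snd (measurableSet_singleton true)
    rw [hI1, labelP, ← measureReal_def, ← integral_indicator_one hs]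
    refine integral_congr_ae (Filter.Eventually.of_forall fun z => ?_)
    by_cases h : z.2 = true <;> simp [hgy, bval, h, Set.indicator]
  -- integrability of the coordinate functions on the product
  have hyj : ∀ j : Fin k,
      Integrable (fun ω : Fin k → X × Bool => gy (ω j)) (Measure.pi fun _ : Fin k => D) :=
    fun j => integrable_of_bounded _ (hmy.comp (measurable_pi_apply j)) 1 fun a => hbval _
  have hfj : ∀ j : Fin k,
      Integrable (fun ω : Fin k → X × Bool => gf (ω j)) (Measure.pi fun _ : Fin k => D) :=
    fun j => integrable_of_bounded _ (hmf.comp (measurable_pi_apply j)) 1 fun a => hbval _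
  have hyfij : ∀ i j : Fin k,
      Integrable (fun ω : Fin k → X × Bool => gy (ω i) * gf (ω j))
        (Measure.pi fun _ : Fin k => D) :=
    fun i j => integrable_of_bounded _
      ((hmy.comp (measurable_pi_apply i)).mul (hmf.comp (measurable_pi_apply j))) 1
      fun a => habs _ _
  set S : (Fin k → X × Bool) → ℝ := fun ω => ∑ j, gy (ω j) with hS
  set T : (Fin k → X × Bool) → ℝ := fun ω => ∑ j, gf (ω j) with hT
  have hiS : Integrable S (Measure.pi fun _ : Fin k => D) :=
    integrable_finset_sum _ fun j _ => hyj j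
  have hiT : Integrable T (Measure.pi fun _ : Fin k => D) :=
    integrable_finset_sum _ fun j _ => hfj j
  have hSTeq : ∀ ω : Fin k → X × Bool, S ω * T ω = ∑ i, ∑ j, gy (ω i) * gf (ω j) := by
    intro ω
    rw [hS, hT, Finset.sum_mul_sum]
  have hiST : Integrable (fun ω => S ω * T ω) (Measure.pi fun _ : Fin k => D) := by
    simp only [hSTeq]
    exact integrable_finset_sum _ fun i _ => integrable_finset_sum _ fun j _ => hyfij i j
  -- expectations of S, T and S*T
  have hES : ∫ ω, S ω ∂(Measure.pi fun _ : Fin k => D) = k * I1 := by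
    rw [hS, integral_finset_sum _ fun j _ => hyj j]
    have : ∀ j : Fin k, ∫ ω, gy (ω j) ∂(Measure.pi fun _ : Fin k => D) = I1 :=
      fun j => pi_integral_single D j gy hiy
    simp [this, Finset.sum_const, mul_comm]
  have hET : ∫ ω, T ω ∂(Measure.pi fun _ : Fin k => D) = k * I2 := by
    rw [hT, integral_finset_sum _ fun j _ => hfj j]
    have : ∀ j : Fin k, ∫ ω, gf (ω j) ∂(Measure.pi fun _ : Fin k => D) = I2 :=
      fun j => pi_integral_single D j gf hif
    simp [this, Finset.sum_const, mul_comm]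
  have hEST : ∫ ω, S ω * T ω ∂(Measure.pi fun _ : Fin k => D)
      = (k : ℝ) ^ 2 * (I1 * I2) + k * (I3 - I1 * I2) := by
    have hterm : ∀ i j : Fin k,
        ∫ ω, gy (ω i) * gf (ω j) ∂(Measure.pi fun _ : Fin k => D)
          = I1 * I2 + (if i = j then I3 - I1 * I2 else 0) := by
      intro i j
      by_cases h : i = j
      · subst h
        rw [if_pos rfl]
        have h1 : ∫ ω, gyf (ω i) ∂(Measure.pi fun _ : Fin k => D) = I3 :=
          pi_integral_single D i gyf hiyf
        have h2 : (fun ω : Fin k → X × Bool => gy (ω i) * gf (ω i))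
            = fun ω => gyf (ω i) := by
          funext ω; simp [hgy, hgf, hgyf]
        rw [h2, h1]; ring
      · rw [if_neg h, pi_integral_pair D h gy gf hiy hif]; ring
    calc ∫ ω, S ω * T ω ∂(Measure.pi fun _ : Fin k => D)
        = ∑ i, ∑ j, ∫ ω, gy (ω i) * gf (ω j) ∂(Measure.pi fun _ : Fin k => D) := by
          simp only [hSTeq]
          rw [integral_finset_sum _ fun i _ =>
            integrable_finset_sum _ fun j _ => hyfij i j]
          exact Finset.sum_congr rfl fun i _ =>
            integral_finset_sum _ fun j _ => hyfij i j
      _ = ∑ i : Fin k, ∑ j : Fin k, (I1 * I2 + (if i = j then I3 - I1 * I2 else 0)) := by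
          simp only [hterm]
      _ = (k : ℝ) ^ 2 * (I1 * I2) + k * (I3 - I1 * I2) := by
          simp [Finset.sum_add_distrib, Finset.sum_ite_eq, Finset.sum_const,
            Finset.card_univ]
          ring
  -- pointwise expansion of the EasyLLP loss
  have hell : ∀ ω : Fin k → X × Bool, ellEZ (labelP D) f ω =
      (I1 - k * I1) + (S ω + ((2 * I1 + (1 - 2 * I1) / k) * T ω
        + (-2 / k) * (S ω * T ω))) := by
    intro ω
    rw [hp]
    show ((k : ℝ) * (labelProp ω - I1) + I1) * (1 - predProp f ω)
        + ((k : ℝ) * (I1 - labelProp ω) + (1 - I1)) * predProp f ω = _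
    have hα : labelProp ω = S ω / k := rfl
    have hβ : predProp f ω = T ω / k := rfl
    rw [hα, hβ]
    field_simp
    ring
  -- error as an integral
  have herr : err D f = I1 + I2 - 2 * I3 := by
    have hsm : MeasurableSet {p : X × Bool | f p.1 ≠ p.2} := by
      have he : {p : X × Bool | f p.1 ≠ p.2}
          = (fun p : X × Bool => (f p.1, p.2)) ⁻¹' {q : Bool × Bool | q.1 ≠ q.2} := rfl
      rw [he]
      exact ((hf.comp measurable_fst).prodMk measurable_snd)
        (Set.toFinite _).measurableSet
    have hind : ∀ z : X × Bool,
        Set.indicator {p : X × Bool | f p.1 ≠ p.2} (fun _ => (1 : ℝ)) z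
          = gy z + gf z - 2 * gyf z := by
      rintro ⟨x, y⟩
      cases hy : y <;> cases hx : f x <;>
        norm_num [Set.indicator, hgy, hgf, hgyf, bval, hx]
    rw [err, ← measureReal_def, ← integral_indicator_one hsm]
    calc ∫ z, Set.indicator {p : X × Bool | f p.1 ≠ p.2} 1 z ∂D
        = ∫ z, (gy z + gf z - 2 * gyf z) ∂D :=
          integral_congr_ae (Filter.Eventually.of_forall fun z => hind z)
      _ = I1 + I2 - 2 * I3 := by
          have h1 : Integrable (fun z => gy z + gf z) D := hiy.add hif
          have h2 : Integrable (fun z => 2 * gyf z) D := hiyf.const_mul 2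
          rw [integral_sub h1 h2, integral_add hiy hif, integral_const_mul _ _]
  -- put everything together
  have hcalc : ∫ ω, ellEZ (labelP D) f ω ∂(Measure.pi fun _ : Fin k => D)
      = (I1 - k * I1) + (k * I1 + ((2 * I1 + (1 - 2 * I1) / k) * (k * I2)
        + (-2 / k) * ((k : ℝ) ^ 2 * (I1 * I2) + k * (I3 - I1 * I2)))) := by
    calc ∫ ω, ellEZ (labelP D) f ω ∂(Measure.pi fun _ : Fin k => D)
        = ∫ ω, ((I1 - k * I1) + (S ω + ((2 * I1 + (1 - 2 * I1) / k) * T ω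
            + (-2 / k) * (S ω * T ω)))) ∂(Measure.pi fun _ : Fin k => D) :=
          integral_congr_ae (Filter.Eventually.of_forall fun ω => hell ω)
      _ = _ := by
          have h3 : Integrable (fun ω => (2 * I1 + (1 - 2 * I1) / (k : ℝ)) * T ω)
              (Measure.pi fun _ : Fin k => D) := hiT.const_mul _
          have h4 : Integrable (fun ω => (-2 / (k : ℝ)) * (S ω * T ω))
              (Measure.pi fun _ : Fin k => D) := hiST.const_mul _
          have h34 : Integrable (fun ω => (2 * I1 + (1 - 2 * I1) / (k : ℝ)) * T ω
              + (-2 / (k : ℝ)) * (S ω * T ω)) (Measure.pi fun _ : Fin k => D) := h3.add h4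
          have h234 : Integrable (fun ω => S ω + ((2 * I1 + (1 - 2 * I1) / (k : ℝ)) * T ω
              + (-2 / (k : ℝ)) * (S ω * T ω))) (Measure.pi fun _ : Fin k => D) := hiS.add h34
          rw [integral_add (integrable_const _) h234, integral_add hiS h34,
            integral_add h3 h4, integral_const_mul _ _, integral_const_mul _ _, integral_const,
            hES, hET, hEST]
          simp [measure_univ]
  rw [hcalc, herr]
  field_simp
  ring

end LLP
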